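/- For 0 < κ ≤ 1 and a unit vector ĉ = (c₁,c₂,c₃) ∈ ℝ³, define the average figure of merit ⟨F⟩(κ,ĉ) := ∫_{S²} (1 − log₂(1 + κ·√(c₁²n₁² + c₂²n₂² + c₃²n₃²))) dμ(n). Then for every 0 < κ ≤ 1 and every unit vector ĉ, ⟨F⟩(κ, (1,1,1)/√3) ≤ ⟨F⟩(κ, ĉ) ≤ ⟨F⟩(κ, (0,0,1)); that is, at fixed κ ≤ 1 the minimum over directions is attained at the isotropic direction and the maximum at the direction with a single nonzero component. -/

import Mathlib

open MeasureTheory Matrix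

/-- Euclidean norm of a vector in ℝ³. -/
noncomputable def enorm3 (v : Fin 3 → ℝ) : ℝ := Real.sqrt (v 0 ^ 2 + v 1 ^ 2 + v 2 ^ 2)

/-- Euclidean inner product on ℝ³. -/
def dot3 (v w : Fin 3 → ℝ) : ℝ := v 0 * w 0 + v 1 * w 1 + v 2 * w 2

/-- `μ` is the uniform (rotation-invariant) probability measure on the unit sphere
`S² = {v ∈ ℝ³ : |v| = 1}`: it is a probability measure, it gives full measure to the
sphere, and it is invariant under every orthogonal transformation of ℝ³. -/
def IsUniformSphereMeasure (μ : Measure (Fin 3 → ℝ)) : Prop :=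
  IsProbabilityMeasure μ ∧
  μ {v | v 0 ^ 2 + v 1 ^ 2 + v 2 ^ 2 ≠ 1} = 0 ∧
  ∀ O : Matrix (Fin 3) (Fin 3) ℝ, O * Oᵀ = 1 → μ.map (Matrix.mulVec O) = μ


/-- The average RSP figure of merit `⟨F⟩(κ,ĉ)` for the MMMS with correlation matrix
`E = κ·diag(c₁,c₂,c₃)`, averaged over the sphere of target states. -/
noncomputable def avgF (μ : Measure (Fin 3 → ℝ)) (κ : ℝ) (c : Fin 3 → ℝ) : ℝ :=
  ∫ n, (1 - Real.logb 2
    (1 + κ * Real.sqrt (c 0 ^ 2 * n 0 ^ 2 + c 1 ^ 2 * n 1 ^ 2 + c 2 ^ 2 * n 2 ^ 2))) ∂μ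

namespace Stmt14Aux

/-- The function `t ↦ log₂(1 + κ√t)`. -/
noncomputable def fk (κ t : ℝ) : ℝ := Real.logb 2 (1 + κ * Real.sqrt t)

lemma fk_continuous {κ : ℝ} (hκ : 0 ≤ κ) : Continuous (fk κ) := by
  have h1 : ∀ t : ℝ, (0:ℝ) < 1 + κ * Real.sqrt t := fun t => by
    have := Real.sqrt_nonneg t; nlinarith
  have hc : Continuous fun t : ℝ => 1 + κ * Real.sqrt t :=
    continuous_const.add (continuous_const.mul Real.continuous_sqrt)
  have : Continuous fun t : ℝ => Real.log (1 + κ * Real.sqrt t) :=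
    hc.log fun t => (h1 t).ne'
  exact this.div_const (Real.log 2)

lemma fk_concave {κ : ℝ} (hκ : 0 ≤ κ) : ConcaveOn ℝ (Set.Icc (0:ℝ) 1) (fk κ) := by
  refine ⟨convex_Icc 0 1, ?_⟩
  intro x hx y hy a b ha hb hab
  have hsx := Real.sqrt_nonneg x
  have hsy := Real.sqrt_nonneg y
  have hux : (0:ℝ) < 1 + κ * Real.sqrt x := by nlinarith
  have huy : (0:ℝ) < 1 + κ * Real.sqrt y := by nlinarith
  have hsq : a * Real.sqrt x + b * Real.sqrt y ≤ Real.sqrt (a * x + b * y) := by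
    have := Real.strictConcaveOn_sqrt.concaveOn.2 (Set.mem_Ici.2 hx.1)
      (Set.mem_Ici.2 hy.1) ha hb hab
    simpa [smul_eq_mul] using this
  have hlog : a * Real.log (1 + κ * Real.sqrt x) + b * Real.log (1 + κ * Real.sqrt y)
      ≤ Real.log (1 + κ * Real.sqrt (a * x + b * y)) := by
    have h1 := (strictConcaveOn_log_Ioi.concaveOn).2 (Set.mem_Ioi.2 hux)
      (Set.mem_Ioi.2 huy) ha hb hab
    simp only [smul_eq_mul] at h1
    refine h1.trans (Real.log_le_log (by
      nlinarith [mul_nonneg ha (mul_nonneg hκ hsx), mul_nonneg hb (mul_nonneg hκ hsy)]) ?_)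
    have heq : a * (1 + κ * Real.sqrt x) + b * (1 + κ * Real.sqrt y)
        = 1 + κ * (a * Real.sqrt x + b * Real.sqrt y) := by linear_combination hab
    rw [heq]
    nlinarith [hsq]
  have hL : (0:ℝ) < Real.log 2 := Real.log_pos one_lt_two
  simp only [fk, Real.logb, smul_eq_mul]
  rw [show a * (Real.log (1 + κ * Real.sqrt x) / Real.log 2)
      + b * (Real.log (1 + κ * Real.sqrt y) / Real.log 2)
      = (a * Real.log (1 + κ * Real.sqrt x) + b * Real.log (1 + κ * Real.sqrt y))
        / Real.log 2 by ring]
  exact (div_le_div_iff_of_pos_right hL).mpr hlog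

lemma fk_nonneg {κ t : ℝ} (hκ : 0 ≤ κ) : 0 ≤ fk κ t := by
  have := Real.sqrt_nonneg t
  exact Real.logb_nonneg one_lt_two (by nlinarith)

lemma fk_le_one {κ t : ℝ} (hκ0 : 0 ≤ κ) (hκ1 : κ ≤ 1) (ht : t ≤ 1) : fk κ t ≤ 1 := by
  have hs0 := Real.sqrt_nonneg t
  have hs1 : Real.sqrt t ≤ 1 := by
    have := Real.sqrt_le_sqrt ht
    simpa [Real.sqrt_one] using this
  have h2 : 1 + κ * Real.sqrt t ≤ 2 := by nlinarith
  calc fk κ t ≤ Real.logb 2 2 := by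
        unfold fk
        exact Real.logb_le_logb_of_le one_lt_two (by nlinarith) h2
    _ = 1 := by simp

lemma integrable_of_bound {μ : Measure (Fin 3 → ℝ)} [IsProbabilityMeasure μ]
    {g : (Fin 3 → ℝ) → ℝ} {C : ℝ} (hm : AEStronglyMeasurable g μ)
    (hb : ∀ᵐ n ∂μ, |g n| ≤ C) : Integrable g μ :=
  (integrable_const C).mono' hm (by simpa [Real.norm_eq_abs] using hb)

lemma integral_mulVec_eq {μ : Measure (Fin 3 → ℝ)}
    (hinv : ∀ O : Matrix (Fin 3) (Fin 3) ℝ, O * Oᵀ = 1 → μ.map (Matrix.mulVec O) = μ)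
    (O : Matrix (Fin 3) (Fin 3) ℝ) (hO : O * Oᵀ = 1)
    {g : (Fin 3 → ℝ) → ℝ} (hg : Continuous g) :
    ∫ n, g (O.mulVec n) ∂μ = ∫ n, g n ∂μ := by
  have hc : Continuous (Matrix.mulVec O) := by
    have he : Matrix.mulVec O = ⇑O.mulVecLin := by
      funext v; exact (Matrix.mulVecLin_apply O v).symm
    rw [he]; exact O.mulVecLin.continuous_of_finiteDimensional
  conv_rhs => rw [← hinv O hO]
  rw [integral_map hc.aemeasurable hg.aestronglyMeasurable]

lemma integral_coord_eq {μ : Measure (Fin 3 → ℝ)}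
    (hinv : ∀ O : Matrix (Fin 3) (Fin 3) ℝ, O * Oᵀ = 1 → μ.map (Matrix.mulVec O) = μ)
    {h : ℝ → ℝ} (hh : Continuous h) (i : Fin 3) :
    ∫ n, h (n i) ∂μ = ∫ n, h (n 2) ∂μ := by
  fin_cases i
  · have hO : (!![(0:ℝ),0,1;0,1,0;1,0,0]) * (!![(0:ℝ),0,1;0,1,0;1,0,0])ᵀ = 1 := by
      have hsymm : (!![(0:ℝ),0,1;0,1,0;1,0,0])ᵀ = !![(0:ℝ),0,1;0,1,0;1,0,0] := by
        ext i j; fin_cases i <;> fin_cases j <;> rfl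
      rw [hsymm]; ext i j; fin_cases i <;> fin_cases j <;>
        simp [Matrix.mul_apply, Fin.sum_univ_three, Matrix.one_apply, Matrix.vecHead, Matrix.vecTail]
    have key := integral_mulVec_eq hinv _ hO (g := fun n => h (n 0))
      (hh.comp (continuous_apply 0))
    have hv : ∀ n : Fin 3 → ℝ, ((!![(0:ℝ),0,1;0,1,0;1,0,0]).mulVec n) 0 = n 2 := by
      intro n; simp [Matrix.mulVec, dotProduct, Fin.sum_univ_three, Matrix.vecHead, Matrix.vecTail]
    simp only [hv] at key
    exact key.symm
  · have hO : (!![(1:ℝ),0,0;0,0,1;0,1,0]) * (!![(1:ℝ),0,0;0,0,1;0,1,0])ᵀ = 1 := by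
      have hsymm : (!![(1:ℝ),0,0;0,0,1;0,1,0])ᵀ = !![(1:ℝ),0,0;0,0,1;0,1,0] := by
        ext i j; fin_cases i <;> fin_cases j <;> rfl
      rw [hsymm]; ext i j; fin_cases i <;> fin_cases j <;>
        simp [Matrix.mul_apply, Fin.sum_univ_three, Matrix.one_apply, Matrix.vecHead, Matrix.vecTail]
    have key := integral_mulVec_eq hinv _ hO (g := fun n => h (n 1))
      (hh.comp (continuous_apply 1))
    have hv : ∀ n : Fin 3 → ℝ, ((!![(1:ℝ),0,0;0,0,1;0,1,0]).mulVec n) 1 = n 2 := by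
      intro n; simp [Matrix.mulVec, dotProduct, Fin.sum_univ_three, Matrix.vecHead, Matrix.vecTail]
    simp only [hv] at key
    exact key.symm
  · rfl

end Stmt14Aux

open Stmt14Aux in
/-- For `0 < κ ≤ 1` and any unit direction `ĉ`, the average figure of merit is minimal
for the isotropic direction `(1,1,1)/√3` and maximal for the direction `(0,0,1)`. -/
theorem stmt14 (μ : Measure (Fin 3 → ℝ)) (hμ : IsUniformSphereMeasure μ)
    (κ : ℝ) (hκ0 : 0 < κ) (hκ1 : κ ≤ 1)
    (c : Fin 3 → ℝ) (hc : c 0 ^ 2 + c 1 ^ 2 + c 2 ^ 2 = 1) :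
    avgF μ κ ![1 / Real.sqrt 3, 1 / Real.sqrt 3, 1 / Real.sqrt 3] ≤ avgF μ κ c ∧
    avgF μ κ c ≤ avgF μ κ ![0, 0, 1] := by
  obtain ⟨hp, hsph, hinv⟩ := hμ
  haveI := hp
  have hκ := hκ0.le
  have aesph : ∀ᵐ n ∂μ, n 0 ^ 2 + n 1 ^ 2 + n 2 ^ 2 = 1 := by
    rw [ae_iff]; exact hsph
  have hcoord : ∀ᵐ n ∂μ, n 0 ^ 2 ≤ 1 ∧ n 1 ^ 2 ≤ 1 ∧ n 2 ^ 2 ≤ 1 := by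
    filter_upwards [aesph] with n hn
    exact ⟨by nlinarith [sq_nonneg (n 1), sq_nonneg (n 2)],
           by nlinarith [sq_nonneg (n 0), sq_nonneg (n 2)],
           by nlinarith [sq_nonneg (n 0), sq_nonneg (n 1)]⟩
  set X : (Fin 3 → ℝ) → ℝ :=
    fun n => c 0 ^ 2 * n 0 ^ 2 + c 1 ^ 2 * n 1 ^ 2 + c 2 ^ 2 * n 2 ^ 2 with hXdef
  have hXcont : Continuous X :=
    ((continuous_const.mul ((continuous_apply (0 : Fin 3)).pow 2)).add
      (continuous_const.mul ((continuous_apply (1 : Fin 3)).pow 2))).add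
      (continuous_const.mul ((continuous_apply (2 : Fin 3)).pow 2))
  have hXmem : ∀ᵐ n ∂μ, X n ∈ Set.Icc (0:ℝ) 1 := by
    filter_upwards [hcoord] with n hn
    obtain ⟨h0, h1, h2⟩ := hn
    simp only [hXdef]
    constructor
    · positivity
    · nlinarith [sq_nonneg (c 0), sq_nonneg (c 1), sq_nonneg (c 2)]
  have hXint : Integrable X μ := integrable_of_bound hXcont.aestronglyMeasurable
    (C := 1) (by filter_upwards [hXmem] with n hn; rw [abs_of_nonneg hn.1]; exact hn.2)
  have hfXcont : Continuous fun n => fk κ (X n) := (fk_continuous hκ).comp hXcont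
  have hfXint : Integrable (fun n => fk κ (X n)) μ :=
    integrable_of_bound hfXcont.aestronglyMeasurable (C := 1)
      (by filter_upwards [hXmem] with n hn
          rw [abs_of_nonneg (fk_nonneg hκ)]; exact fk_le_one hκ hκ1 hn.2)
  have hsqcont : ∀ i : Fin 3, Continuous fun n : Fin 3 → ℝ => (n i) ^ 2 :=
    fun i => (continuous_apply i).pow 2
  have hsqint : ∀ i : Fin 3, Integrable (fun n : Fin 3 → ℝ => (n i) ^ 2) μ := by
    intro i
    refine integrable_of_bound (hsqcont i).aestronglyMeasurable (C := 1) ?_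
    filter_upwards [hcoord] with n hn
    rw [abs_of_nonneg (sq_nonneg _)]
    fin_cases i
    · exact hn.1
    · exact hn.2.1
    · exact hn.2.2
  have hfsqint : ∀ i : Fin 3, Integrable (fun n : Fin 3 → ℝ => fk κ ((n i) ^ 2)) μ := by
    intro i
    refine integrable_of_bound ((fk_continuous hκ).comp (hsqcont i)).aestronglyMeasurable
      (C := 1) ?_
    filter_upwards [hcoord] with n hn
    rw [abs_of_nonneg (fk_nonneg hκ)]
    refine fk_le_one hκ hκ1 ?_
    fin_cases i
    · exact hn.1
    · exact hn.2.1
    · exact hn.2.2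
  have hIeq : ∀ i : Fin 3, ∫ n, (n i) ^ 2 ∂μ = ∫ n, (n 2) ^ 2 ∂μ := fun i =>
    integral_coord_eq hinv (h := fun t => t ^ 2) (continuous_pow 2) i
  have hsum1 : ∫ n, ((n 0) ^ 2 + (n 1) ^ 2 + (n 2) ^ 2) ∂μ = 1 := by
    rw [integral_congr_ae (g := fun _ => (1:ℝ)) aesph]
    simp
  have hI : ∫ n, (n 2) ^ 2 ∂μ = 1/3 := by
    have hs : ∫ n, ((n 0) ^ 2 + (n 1) ^ 2 + (n 2) ^ 2) ∂μ
        = ∫ n, (n 0) ^ 2 ∂μ + ∫ n, (n 1) ^ 2 ∂μ + ∫ n, (n 2) ^ 2 ∂μ := by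
      have h01 : Integrable (fun n : Fin 3 → ℝ => n 0 ^ 2 + n 1 ^ 2) μ :=
        (hsqint 0).add (hsqint 1)
      rw [integral_add h01 (hsqint 2), integral_add (hsqint 0) (hsqint 1)]
    rw [hs, hIeq 0, hIeq 1] at hsum1
    linarith
  have hXval : ∫ n, X n ∂μ = 1/3 := by
    have hval : ∫ n, X n ∂μ = c 0 ^ 2 * ∫ n, (n 0) ^ 2 ∂μ
        + c 1 ^ 2 * ∫ n, (n 1) ^ 2 ∂μ + c 2 ^ 2 * ∫ n, (n 2) ^ 2 ∂μ := by
      simp only [hXdef]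
      have ha : Integrable (fun n : Fin 3 → ℝ => c 0 ^ 2 * n 0 ^ 2) μ :=
        (hsqint 0).const_mul _
      have hb : Integrable (fun n : Fin 3 → ℝ => c 1 ^ 2 * n 1 ^ 2) μ :=
        (hsqint 1).const_mul _
      have hcc : Integrable (fun n : Fin 3 → ℝ => c 2 ^ 2 * n 2 ^ 2) μ :=
        (hsqint 2).const_mul _
      have hab : Integrable (fun n : Fin 3 → ℝ => c 0 ^ 2 * n 0 ^ 2 + c 1 ^ 2 * n 1 ^ 2) μ :=
        ha.add hb
      rw [integral_add hab hcc, integral_add ha hb,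
        integral_const_mul, integral_const_mul, integral_const_mul]
    rw [hval, hIeq 0, hIeq 1, hI]
    linarith [hc]
  have hjensen : ∫ n, fk κ (X n) ∂μ ≤ fk κ (1/3) := by
    have h := ConcaveOn.le_map_integral (μ := μ) (fk_concave hκ)
      ((fk_continuous hκ).continuousOn) isClosed_Icc hXmem hXint (by exact hfXint)
    rwa [hXval] at h
  have havgc : avgF μ κ c = 1 - ∫ n, fk κ (X n) ∂μ := by
    unfold avgF
    have he : (∫ n, (1 - Real.logb 2 (1 + κ * Real.sqrt
        (c 0 ^ 2 * n 0 ^ 2 + c 1 ^ 2 * n 1 ^ 2 + c 2 ^ 2 * n 2 ^ 2))) ∂μ)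
        = ∫ n, (1 - fk κ (X n)) ∂μ := rfl
    rw [he, integral_sub (integrable_const 1) hfXint, integral_const]
    simp
  have h3 : ((1:ℝ) / Real.sqrt 3) ^ 2 = 1/3 := by
    rw [div_pow, one_pow, Real.sq_sqrt (by norm_num : (0:ℝ) ≤ 3)]
  have hiso : avgF μ κ ![1 / Real.sqrt 3, 1 / Real.sqrt 3, 1 / Real.sqrt 3]
      = 1 - fk κ (1/3) := by
    unfold avgF
    rw [integral_congr_ae (g := fun _ => 1 - fk κ (1/3)) ?_, integral_const]
    · simp
    · filter_upwards [aesph] with n hn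
      have e : (![(1:ℝ) / Real.sqrt 3, 1 / Real.sqrt 3, 1 / Real.sqrt 3]) 0 ^ 2 * n 0 ^ 2
          + (![(1:ℝ) / Real.sqrt 3, 1 / Real.sqrt 3, 1 / Real.sqrt 3]) 1 ^ 2 * n 1 ^ 2
          + (![(1:ℝ) / Real.sqrt 3, 1 / Real.sqrt 3, 1 / Real.sqrt 3]) 2 ^ 2 * n 2 ^ 2
          = 1/3 := by
        show (1 / Real.sqrt 3) ^ 2 * n 0 ^ 2 + (1 / Real.sqrt 3) ^ 2 * n 1 ^ 2
          + (1 / Real.sqrt 3) ^ 2 * n 2 ^ 2 = 1/3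
        rw [h3]; linarith
      rw [e]
      rfl
  have hfsqeq : ∀ i : Fin 3, ∫ n, fk κ ((n i) ^ 2) ∂μ = ∫ n, fk κ ((n 2) ^ 2) ∂μ := fun i =>
    integral_coord_eq hinv (h := fun t => fk κ (t ^ 2))
      ((fk_continuous hκ).comp (continuous_pow 2)) i
  have hptw : ∀ᵐ n ∂μ, c 0 ^ 2 * fk κ (n 0 ^ 2) + c 1 ^ 2 * fk κ (n 1 ^ 2)
      + c 2 ^ 2 * fk κ (n 2 ^ 2) ≤ fk κ (X n) := by
    filter_upwards [hcoord] with n hn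
    obtain ⟨h0, h1, h2⟩ := hn
    have hjs := ConcaveOn.le_map_sum (fk_concave hκ) (t := Finset.univ)
      (w := fun i => c i ^ 2) (p := fun i => (n i) ^ 2)
      (fun i _ => sq_nonneg _) (by rw [Fin.sum_univ_three]; exact hc)
      (fun i _ => by
        fin_cases i
        · exact ⟨sq_nonneg _, h0⟩
        · exact ⟨sq_nonneg _, h1⟩
        · exact ⟨sq_nonneg _, h2⟩)
    simp only [Fin.sum_univ_three, smul_eq_mul] at hjs
    exact hjs
  have hsum_int : Integrable (fun n => c 0 ^ 2 * fk κ (n 0 ^ 2)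
      + c 1 ^ 2 * fk κ (n 1 ^ 2) + c 2 ^ 2 * fk κ (n 2 ^ 2)) μ :=
    (((hfsqint 0).const_mul _).add ((hfsqint 1).const_mul _)).add ((hfsqint 2).const_mul _)
  have hle : ∫ n, fk κ ((n 2) ^ 2) ∂μ ≤ ∫ n, fk κ (X n) ∂μ := by
    have hsum_val : ∫ n, (c 0 ^ 2 * fk κ (n 0 ^ 2) + c 1 ^ 2 * fk κ (n 1 ^ 2)
        + c 2 ^ 2 * fk κ (n 2 ^ 2)) ∂μ = ∫ n, fk κ ((n 2) ^ 2) ∂μ := by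
      have ha : Integrable (fun n : Fin 3 → ℝ => c 0 ^ 2 * fk κ (n 0 ^ 2)) μ :=
        (hfsqint 0).const_mul _
      have hb : Integrable (fun n : Fin 3 → ℝ => c 1 ^ 2 * fk κ (n 1 ^ 2)) μ :=
        (hfsqint 1).const_mul _
      have hcc : Integrable (fun n : Fin 3 → ℝ => c 2 ^ 2 * fk κ (n 2 ^ 2)) μ :=
        (hfsqint 2).const_mul _
      have hab : Integrable
          (fun n : Fin 3 → ℝ => c 0 ^ 2 * fk κ (n 0 ^ 2) + c 1 ^ 2 * fk κ (n 1 ^ 2)) μ :=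
        ha.add hb
      rw [integral_add hab hcc, integral_add ha hb,
        integral_const_mul, integral_const_mul, integral_const_mul, hfsqeq 0, hfsqeq 1]
      linear_combination (∫ n, fk κ ((n 2) ^ 2) ∂μ) * hc
    calc ∫ n, fk κ ((n 2) ^ 2) ∂μ
        = ∫ n, (c 0 ^ 2 * fk κ (n 0 ^ 2) + c 1 ^ 2 * fk κ (n 1 ^ 2)
          + c 2 ^ 2 * fk κ (n 2 ^ 2)) ∂μ := hsum_val.symm
      _ ≤ ∫ n, fk κ (X n) ∂μ := integral_mono_ae hsum_int hfXint hptw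
  have have2 : avgF μ κ ![0, 0, 1] = 1 - ∫ n, fk κ ((n 2) ^ 2) ∂μ := by
    unfold avgF
    have e : ∀ n : Fin 3 → ℝ, (![(0:ℝ), 0, 1]) 0 ^ 2 * n 0 ^ 2
        + (![(0:ℝ), 0, 1]) 1 ^ 2 * n 1 ^ 2 + (![(0:ℝ), 0, 1]) 2 ^ 2 * n 2 ^ 2
        = (n 2) ^ 2 := by
      intro n
      show (0:ℝ) ^ 2 * n 0 ^ 2 + (0:ℝ) ^ 2 * n 1 ^ 2 + (1:ℝ) ^ 2 * n 2 ^ 2 = n 2 ^ 2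
      ring
    simp only [e]
    have he2 : (∫ n, (1 - Real.logb 2 (1 + κ * Real.sqrt (n 2 ^ 2))) ∂μ)
        = ∫ n, (1 - fk κ (n 2 ^ 2)) ∂μ := rfl
    rw [he2, integral_sub (integrable_const 1) (hfsqint 2), integral_const]
    simp
  constructor
  · rw [hiso, havgc]; linarith [hjensen]
  · rw [have2, havgc]; linarith [hle]
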